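/- Let (A_j)_{j≥0} be a sequence of invertible linear maps on ℝ^N and (T_j)_{j≥1} linear maps with ‖A_{i} A_{i+1}^{-1}‖ ≤ δ for 0 < δ < 1 and ‖A_i T_{i+1} A_i^{-1} - Id‖ ≤ c_i with ∏_{i≥0}(1 + c_i) ≤ 2. Then for the composition S_{j+1} = T_1 T_2 ⋯ T_{j+1} one has ‖A_0 S_{j+1} A_j^{-1}‖ ≤ 2 δ^j. -/

import Mathlib

/-- Abstract weighted chain estimate: if ‖A_i A_{i+1}⁻¹‖ ≤ δ and
‖A_i T_{i+1} A_i⁻¹ - Id‖ ≤ c_i with ∏(1+c_i) ≤ 2, then the composition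
S_{j+1} = T₁⋯T_{j+1} satisfies ‖A₀ S_{j+1} A_j⁻¹‖ ≤ 2δ^j. -/
theorem stmt16 (E : Type*) [NormedAddCommGroup E] [NormedSpace ℝ E]
    (A : ℕ → E ≃L[ℝ] E) (T : ℕ → E →L[ℝ] E) (c : ℕ → ℝ) (δ : ℝ)
    (hδ0 : 0 < δ) (hδ1 : δ < 1)
    (hA : ∀ i, ‖((A i : E →L[ℝ] E)).comp ((A (i + 1)).symm : E →L[ℝ] E)‖ ≤ δ)
    (hc : ∀ i, 0 ≤ c i)
    (hT : ∀ i, ‖((A i : E →L[ℝ] E)).comp ((T (i + 1)).comp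
        ((A i).symm : E →L[ℝ] E)) - ContinuousLinearMap.id ℝ E‖ ≤ c i)
    (hprod : ∀ J : ℕ, ∏ i ∈ Finset.range J, (1 + c i) ≤ 2) :
    ∀ j : ℕ,
      ‖((A 0 : E →L[ℝ] E)).comp
          (((Nat.rec (motive := fun _ => E →L[ℝ] E) (T 1)
            (fun m S => S.comp (T (m + 2))) j)).comp
            ((A j).symm : E →L[ℝ] E))‖ ≤ 2 * δ ^ j := by
  set S : ℕ → E →L[ℝ] E := fun j =>
    Nat.rec (motive := fun _ => E →L[ℝ] E) (T 1) (fun m S => S.comp (T (m + 2))) j with hS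
  -- conjugated T's are bounded by 1 + c i
  have hTb : ∀ i, ‖((A i : E →L[ℝ] E)).comp ((T (i + 1)).comp
      ((A i).symm : E →L[ℝ] E))‖ ≤ 1 + c i := by
    intro i
    set X : E →L[ℝ] E := ((A i : E →L[ℝ] E)).comp ((T (i + 1)).comp
      ((A i).symm : E →L[ℝ] E)) with hX
    have h1 : ‖X‖ ≤ ‖X - ContinuousLinearMap.id ℝ E‖ + ‖ContinuousLinearMap.id ℝ E‖ := by
      calc ‖X‖ = ‖(X - ContinuousLinearMap.id ℝ E) + ContinuousLinearMap.id ℝ E‖ := by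
            rw [sub_add_cancel]
        _ ≤ _ := norm_add_le _ _
    have h2 : ‖ContinuousLinearMap.id ℝ E‖ ≤ 1 := ContinuousLinearMap.norm_id_le
    linarith [hT i]
  have key : ∀ j, ‖((A 0 : E →L[ℝ] E)).comp ((S j).comp ((A j).symm : E →L[ℝ] E))‖
      ≤ δ ^ j * ∏ i ∈ Finset.range (j + 1), (1 + c i) := by
    intro j
    induction j with
    | zero =>
      simpa [show S 0 = T 1 from rfl] using hTb 0
    | succ j ih =>
      have hSsucc : S (j + 1) = (S j).comp (T (j + 2)) := rfl
      have heq : ((A 0 : E →L[ℝ] E)).comp ((S (j+1)).comp ((A (j+1)).symm : E →L[ℝ] E))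
          = (((A 0 : E →L[ℝ] E)).comp ((S j).comp ((A j).symm : E →L[ℝ] E))).comp
            ((((A j : E →L[ℝ] E)).comp ((A (j+1)).symm : E →L[ℝ] E)).comp
              (((A (j+1) : E →L[ℝ] E)).comp ((T (j+2)).comp
                ((A (j+1)).symm : E →L[ℝ] E)))) := by
        ext x
        simp [hSsucc, ContinuousLinearMap.comp_apply]
      have hnn : (0:ℝ) ≤ ∏ i ∈ Finset.range (j + 1), (1 + c i) :=
        Finset.prod_nonneg fun i _ => by linarith [hc i]
      calc ‖((A 0 : E →L[ℝ] E)).comp ((S (j+1)).comp ((A (j+1)).symm : E →L[ℝ] E))‖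
          ≤ ‖((A 0 : E →L[ℝ] E)).comp ((S j).comp ((A j).symm : E →L[ℝ] E))‖ *
            (‖((A j : E →L[ℝ] E)).comp ((A (j+1)).symm : E →L[ℝ] E)‖ *
            ‖((A (j+1) : E →L[ℝ] E)).comp ((T (j+2)).comp
              ((A (j+1)).symm : E →L[ℝ] E))‖) := by
            rw [heq]
            exact le_trans (ContinuousLinearMap.opNorm_comp_le _ _)
              (by gcongr; exact ContinuousLinearMap.opNorm_comp_le _ _)
        _ ≤ (δ ^ j * ∏ i ∈ Finset.range (j + 1), (1 + c i)) * (δ * (1 + c (j+1))) := by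
            exact mul_le_mul ih
              (mul_le_mul (hA j) (hTb (j+1)) (norm_nonneg _) hδ0.le)
              (mul_nonneg (norm_nonneg _) (norm_nonneg _))
              (mul_nonneg (pow_nonneg hδ0.le j) hnn)
        _ = δ ^ (j+1) * ∏ i ∈ Finset.range (j + 2), (1 + c i) := by
            rw [Finset.prod_range_succ (fun i => 1 + c i) (j+1)]; ring
  intro j
  show ‖((A 0 : E →L[ℝ] E)).comp ((S j).comp ((A j).symm : E →L[ℝ] E))‖ ≤ 2 * δ ^ j
  calc ‖((A 0 : E →L[ℝ] E)).comp ((S j).comp ((A j).symm : E →L[ℝ] E))‖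
      ≤ δ ^ j * ∏ i ∈ Finset.range (j + 1), (1 + c i) := key j
    _ ≤ δ ^ j * 2 := by
        have := hprod (j + 1)
        have hp : (0:ℝ) < δ ^ j := pow_pos hδ0 j
        nlinarith
    _ = 2 * δ ^ j := by ring
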